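/- Let G=(V,E) be a graph, D a strongly connected orientation, s, t nodes such that D contains two arc-disjoint s→t directed paths, and P any s→t directed path in D. Then the digraph D' obtained from D by reversing the arcs of P is also strongly connected. -/

import Mathlib

open Finset

/-- Head of edge `e` under orientation `o` (an orientation picks, for each edge,
one of its two end-nodes as head). -/
def ohead {V E : Type*} (ends : E → V × V) (o : E → Bool) (e : E) : V :=
  if o e then (ends e).1 else (ends e).2

/-- Tail of edge `e` under orientation `o`. -/
def otail {V E : Type*} (ends : E → V × V) (o : E → Bool) (e : E) : V :=
  if o e then (ends e).2 else (ends e).1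

/-- In-degree of node `v` in the orientation `o` of the graph. -/
def indeg {V E : Type*} [Fintype E] [DecidableEq V] (ends : E → V × V) (o : E → Bool)
    (v : V) : ℕ :=
  (Finset.univ.filter fun e => ohead ends o e = v).card

/-- `e_G(X)`: number of edges with at least one end-node in `X`. -/
def eG {V E : Type*} [Fintype E] [DecidableEq V] (ends : E → V × V) (X : Finset V) : ℕ :=
  (Finset.univ.filter fun e => (ends e).1 ∈ X ∨ (ends e).2 ∈ X).card

/-- `i_G(X)`: number of edges induced by `X` (both end-nodes in `X`). -/
def iG {V E : Type*} [Fintype E] [DecidableEq V] (ends : E → V × V) (X : Finset V) : ℕ :=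
  (Finset.univ.filter fun e => (ends e).1 ∈ X ∧ (ends e).2 ∈ X).card

/-- `ρ_D(X)`: number of arcs entering `X` (head in `X`, tail outside). -/
def inCut {V E : Type*} [Fintype E] [DecidableEq V] (ends : E → V × V) (o : E → Bool)
    (X : Finset V) : ℕ :=
  (Finset.univ.filter fun e => ohead ends o e ∈ X ∧ otail ends o e ∉ X).card

/-- `d_G(X)`: number of edges with exactly one end-node in `X`. -/
def dG {V E : Type*} [Fintype E] [DecidableEq V] (ends : E → V × V) (X : Finset V) : ℕ :=
  (Finset.univ.filter fun e =>
    ((ends e).1 ∈ X ∧ (ends e).2 ∉ X) ∨ ((ends e).2 ∈ X ∧ (ends e).1 ∉ X)).card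

/-- `Reach ends o s t`: there is a directed path from `s` to `t` in the orientation `o`. -/
def Reach {V E : Type*} (ends : E → V × V) (o : E → Bool) : V → V → Prop :=
  Relation.ReflTransGen fun u v => ∃ e, otail ends o e = u ∧ ohead ends o e = v

/-- `IsDipath ends o s t P`: the list of edges `P` forms a directed walk from `s` to `t`. -/
def IsDipath {V E : Type*} (ends : E → V × V) (o : E → Bool) : V → V → List E → Prop
  | s, t, [] => s = t
  | s, t, e :: P => otail ends o e = s ∧ IsDipath ends o (ohead ends o e) t P

/-- The components of `m` sorted in decreasing order. -/
def decSeq {V : Type*} [Fintype V] (m : V → ℕ) : List ℕ :=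
  (Multiset.sort (Finset.univ.val.map m) (· ≤ ·)).reverse

/-- The components of `m` sorted in increasing order. -/
def incSeq {V : Type*} [Fintype V] (m : V → ℕ) : List ℕ :=
  Multiset.sort (Finset.univ.val.map m) (· ≤ ·)

/-- Reversing the arcs in the list `P`. -/
def revOrient {E : Type*} [DecidableEq E] (o : E → Bool) (P : List E) : E → Bool :=
  fun e => if e ∈ P then ! o e else o e

section Aux

variable {V E : Type*} [DecidableEq V] [DecidableEq E] (ends : E → V × V) (o : E → Bool)

lemma ohead_revOrient_mem {P : List E} {e : E} (h : e ∈ P) :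
    ohead ends (revOrient o P) e = otail ends o e := by
  cases hoe : o e <;> simp [ohead, otail, revOrient, h, hoe]

lemma otail_revOrient_mem {P : List E} {e : E} (h : e ∈ P) :
    otail ends (revOrient o P) e = ohead ends o e := by
  cases hoe : o e <;> simp [ohead, otail, revOrient, h, hoe]

lemma ohead_revOrient_not_mem {P : List E} {e : E} (h : e ∉ P) :
    ohead ends (revOrient o P) e = ohead ends o e := by
  simp [ohead, revOrient, h]

lemma otail_revOrient_not_mem {P : List E} {e : E} (h : e ∉ P) :
    otail ends (revOrient o P) e = otail ends o e := by
  simp [otail, revOrient, h]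

/-- A `Reach` from outside `Z` to inside `Z` yields an arc entering `Z`. -/
lemma reach_cross {Z : Finset V} {a b : V} (h : Reach ends o a b) :
    a ∉ Z → b ∈ Z → ∃ e, ohead ends o e ∈ Z ∧ otail ends o e ∉ Z := by
  induction h using Relation.ReflTransGen.head_induction_on with
  | refl => intro ha hb; exact absurd hb ha
  | head step h ih =>
      intro ha hb
      obtain ⟨e, het, heh⟩ := step
      by_cases hc : ohead ends o e ∈ Z
      · exact ⟨e, hc, het ▸ ha⟩
      · exact ih (heh ▸ hc) hb

/-- A dipath from outside `Z` to inside `Z` contains an arc entering `Z`. -/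
lemma dipath_cross {Z : Finset V} : ∀ {a b : V} {L : List E},
    IsDipath ends o a b L → a ∉ Z → b ∈ Z →
      ∃ e ∈ L, ohead ends o e ∈ Z ∧ otail ends o e ∉ Z := by
  intro a b L
  induction L generalizing a with
  | nil => intro h ha hb; exact absurd (h ▸ hb) ha
  | cons e L ih =>
      intro h ha hb
      by_cases hc : ohead ends o e ∈ Z
      · exact ⟨e, List.mem_cons_self .., hc, h.1 ▸ ha⟩
      · obtain ⟨f, hf, hf'⟩ := ih h.2 hc hb
        exact ⟨f, List.mem_cons_of_mem _ hf, hf'⟩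

/-- Counting identity: along a dipath from `a` to `b`, the number of arcs entering
`Z` minus the number of arcs leaving `Z` equals `[b ∈ Z] - [a ∈ Z]`. -/
lemma dipath_count (Z : Finset V) : ∀ {a b : V} {L : List E},
    IsDipath ends o a b L →
    L.countP (fun e => decide (ohead ends o e ∈ Z ∧ otail ends o e ∉ Z))
      + (if a ∈ Z then 1 else 0)
    = L.countP (fun e => decide (otail ends o e ∈ Z ∧ ohead ends o e ∉ Z))
      + (if b ∈ Z then 1 else 0) := by
  intro a b L
  induction L generalizing a with
  | nil => intro h; have hab : a = b := h; simp [hab]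
  | cons e L ih =>
      intro h
      have h1 := h.1
      have key := ih h.2
      rw [List.countP_cons, List.countP_cons, ← h1]
      by_cases hT : otail ends o e ∈ Z <;> by_cases hH : ohead ends o e ∈ Z <;>
        simp [hT, hH] at key ⊢ <;> omega

end Aux

/-- If `D` is strongly connected, contains two arc-disjoint `s→t`
dipaths, and `P` is any `s→t` dipath in `D`, then reversing `P` yields a strongly
connected digraph. -/
theorem reverse_dipath_strongly_connected {V E : Type*}
    [Fintype V] [Fintype E] [DecidableEq V] [DecidableEq E]
    (ends : E → V × V) (hloop : ∀ e, (ends e).1 ≠ (ends e).2)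
    (o : E → Bool) (ho : ∀ u v : V, Reach ends o u v) (s t : V)
    (htwo : ∃ P Q : List E, IsDipath ends o s t P ∧ IsDipath ends o s t Q ∧ P.Disjoint Q)
    (P : List E) (hP : IsDipath ends o s t P) (hPnd : P.Nodup) :
    ∀ u v : V, Reach ends (revOrient o P) u v := by
  classical
  intro u v
  by_contra hreach
  set o' := revOrient o P with ho'def
  set Z : Finset V := Finset.univ.filter (fun x => Reach ends o' x v) with hZ
  have hmem : ∀ x, x ∈ Z ↔ Reach ends o' x v := by
    intro x; simp [hZ]
  have hv : v ∈ Z := (hmem v).2 Relation.ReflTransGen.refl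
  have hu : u ∉ Z := fun h => hreach ((hmem u).1 h)
  -- no arc enters Z in the reversed digraph
  have hclosed : ∀ e, ohead ends o' e ∈ Z → otail ends o' e ∈ Z := by
    intro e he
    exact (hmem _).2 (Relation.ReflTransGen.head ⟨e, rfl, rfl⟩ ((hmem _).1 he))
  -- hence no arc of P leaves Z in the original digraph
  have hPleave : ∀ e ∈ P, ¬(otail ends o e ∈ Z ∧ ohead ends o e ∉ Z) := by
    intro e heP hcon
    have := hclosed e
    rw [ohead_revOrient_mem ends o heP, otail_revOrient_mem ends o heP] at this
    exact hcon.2 (this hcon.1)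
  have hcntL : P.countP (fun e => decide (otail ends o e ∈ Z ∧ ohead ends o e ∉ Z)) = 0 := by
    rw [List.countP_eq_zero]
    intro e he
    simpa using hPleave e he
  have hid := dipath_count ends o Z hP
  rw [hcntL] at hid
  by_cases hts : t ∈ Z ∧ s ∉ Z
  · -- exactly one arc of P enters Z
    have hcntE : P.countP (fun e => decide (ohead ends o e ∈ Z ∧ otail ends o e ∉ Z)) = 1 := by
      rw [if_neg hts.2, if_pos hts.1] at hid
      omega
    obtain ⟨Q1, Q2, hQ1, hQ2, hdisj⟩ := htwo
    obtain ⟨e1, he1Q, he1⟩ := dipath_cross ends o hQ1 hts.2 hts.1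
    obtain ⟨e2, he2Q, he2⟩ := dipath_cross ends o hQ2 hts.2 hts.1
    have hne : e1 ≠ e2 := fun h => hdisj he1Q (h ▸ he2Q)
    have hout : e1 ∉ P ∨ e2 ∉ P := by
      by_contra hcon
      push_neg at hcon
      rw [List.countP_eq_length_filter] at hcntE
      obtain ⟨x, hx⟩ := List.length_eq_one_iff.1 hcntE
      have h1 : e1 ∈ P.filter (fun e => decide (ohead ends o e ∈ Z ∧ otail ends o e ∉ Z)) := by
        rw [List.mem_filter]; exact ⟨hcon.1, by simpa using he1⟩
      have h2 : e2 ∈ P.filter (fun e => decide (ohead ends o e ∈ Z ∧ otail ends o e ∉ Z)) := by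
        rw [List.mem_filter]; exact ⟨hcon.2, by simpa using he2⟩
      rw [hx, List.mem_singleton] at h1 h2
      exact hne (h1.trans h2.symm)
    rcases hout with hnp | hnp
    · have := hclosed e1
      rw [ohead_revOrient_not_mem ends o hnp, otail_revOrient_not_mem ends o hnp] at this
      exact he1.2 (this he1.1)
    · have := hclosed e2
      rw [ohead_revOrient_not_mem ends o hnp, otail_revOrient_not_mem ends o hnp] at this
      exact he2.2 (this he2.1)
  · -- no arc of P enters Z
    have hcntE : P.countP (fun e => decide (ohead ends o e ∈ Z ∧ otail ends o e ∉ Z)) = 0 := by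
      rcases Decidable.em (s ∈ Z) with h2 | h2 <;> rcases Decidable.em (t ∈ Z) with h1 | h1
      · rw [if_pos h2, if_pos h1] at hid; omega
      · rw [if_pos h2, if_neg h1] at hid; omega
      · exact absurd ⟨h1, h2⟩ hts
      · rw [if_neg h2, if_neg h1] at hid; omega
    obtain ⟨e, heh, het⟩ := reach_cross ends o (ho u v) hu hv
    have hnp : e ∉ P := by
      intro hcon
      have hpos : 0 < P.countP (fun e => decide (ohead ends o e ∈ Z ∧ otail ends o e ∉ Z)) :=
        List.countP_pos_iff.2 ⟨e, hcon, by simpa using And.intro heh het⟩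
      omega
    have := hclosed e
    rw [ohead_revOrient_not_mem ends o hnp, otail_revOrient_not_mem ends o hnp] at this
    exact het (this heh)
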